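/- arXiv:1104.3402 — 3 statements merged into one kernel-verified Lean document; each statement's English description precedes it below -/
import Mathlib

section
/- Suppose F_n are probability measures on ℝ and ρ is a Radon measure on E = [-∞,∞] \ {0} such that n·F_n converges vaguely to ρ on E (i.e., ∫ h d(nF_n) → ∫ h dρ for every continuous compactly supported h on E). Then for every bounded continuous function g : ℝ → ℝ that vanishes in a neighborhood of 0, ∫ g(x) n F_n(dx) → ∫ g(x) ρ(dx) as n → ∞. -/
open MeasureTheory Set Filter Topology


/-- A function vanishing on a neighborhood of 0. -/
def VanishesNearZero (g : ℝ → ℝ) : Prop := ∃ δ > (0 : ℝ), ∀ x : ℝ, |x| ≤ δ → g x = 0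

/-- Test functions corresponding to continuous compactly supported functions on
`E = [-∞,∞] \ {0}`: continuous on ℝ, vanishing near 0, with limits at `±∞`. -/
def CcTestOnE (g : ℝ → ℝ) : Prop :=
  Continuous g ∧ VanishesNearZero g ∧
    (∃ L : ℝ, Tendsto g atTop (𝓝 L)) ∧ (∃ L : ℝ, Tendsto g atBot (𝓝 L))

noncomputable def cutA (M : ℝ) (x : ℝ) : ℝ := max 0 (min 1 (M + 1 - |x|))

lemma cutA_cont (M : ℝ) : Continuous (cutA M) := by
  unfold cutA; fun_prop

lemma cutA_nonneg (M x : ℝ) : 0 ≤ cutA M x := le_max_left _ _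

lemma cutA_le_one (M x : ℝ) : cutA M x ≤ 1 := by
  unfold cutA
  rcases le_total (min 1 (M + 1 - |x|)) 0 with h | h
  · simpa [max_eq_left h] using zero_le_one
  · rw [max_eq_right h]; exact min_le_left _ _

lemma cutA_eq_one (M x : ℝ) (h : |x| ≤ M) : cutA M x = 1 := by
  unfold cutA
  rw [min_eq_left (by linarith), max_eq_right (by linarith : (0:ℝ) ≤ 1)]

lemma cutA_eq_zero (M x : ℝ) (h : M + 1 ≤ |x|) : cutA M x = 0 := by
  unfold cutA
  rw [max_eq_left]
  exact le_trans (min_le_right _ _) (by linarith)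

lemma integrable_of_bdd (μ : Measure ℝ) [IsFiniteMeasure μ] (f : ℝ → ℝ)
    (hf : Continuous f) (C : ℝ) (hC : ∀ x, |f x| ≤ C) : Integrable f μ :=
  (integrable_const C).mono' hf.aestronglyMeasurable
    (ae_of_all _ fun x => by simpa [Real.norm_eq_abs] using hC x)

lemma integrable_of_bdd_vanish (ρ : Measure ℝ) (f : ℝ → ℝ) (hf : Continuous f)
    (C δ : ℝ) (hC : ∀ x, |f x| ≤ C) (h0 : ∀ x, |x| ≤ δ → f x = 0)
    (hfin : ρ {x | δ < |x|} ≠ ⊤) : Integrable f ρ := by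
  have hSm : MeasurableSet {x : ℝ | δ < |x|} :=
    measurableSet_lt measurable_const continuous_abs.measurable
  have hInd : Integrable ({x : ℝ | δ < |x|}.indicator fun _ => C) ρ := by
    rw [integrable_indicator_iff hSm]
    exact integrableOn_const hfin
  apply hInd.mono' hf.aestronglyMeasurable
  filter_upwards with x
  by_cases hx : δ < |x|
  · rw [Set.indicator_of_mem (show x ∈ {x : ℝ | δ < |x|} from hx)]
    simpa [Real.norm_eq_abs] using hC x
  · push_neg at hx
    rw [h0 x hx, Set.indicator_of_notMem (by simpa using hx)]
    simp

lemma abs_integral_mul_le (μ : Measure ℝ) (g ψ : ℝ → ℝ) (C : ℝ)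
    (hC : ∀ x, |g x| ≤ C) (hψ0 : ∀ x, 0 ≤ ψ x)
    (hint : Integrable (fun x => g x * ψ x) μ) (hintψ : Integrable ψ μ) :
    |∫ x, g x * ψ x ∂μ| ≤ C * ∫ x, ψ x ∂μ := by
  have h1 : |∫ x, g x * ψ x ∂μ| ≤ ∫ x, |g x * ψ x| ∂μ := by
    simpa only [Real.norm_eq_abs] using
      norm_integral_le_integral_norm (μ := μ) (fun x => g x * ψ x)
  have h2 : ∫ x, |g x * ψ x| ∂μ ≤ ∫ x, C * ψ x ∂μ := by
    apply integral_mono hint.abs (hintψ.const_mul C)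
    intro x
    show |g x * ψ x| ≤ C * ψ x
    rw [abs_mul, abs_of_nonneg (hψ0 x)]
    exact mul_le_mul_of_nonneg_right (hC x) (hψ0 x)
  calc |∫ x, g x * ψ x ∂μ| ≤ ∫ x, C * ψ x ∂μ := h1.trans h2
    _ = C * ∫ x, ψ x ∂μ := integral_const_mul _ _

lemma tail_bound (ρ : Measure ℝ) (α p q : ℝ) (hα : 0 < α)
    (hρp : ∀ x : ℝ, 0 < x → ρ (Ioi x) = ENNReal.ofReal (p * x ^ (-α)))
    (hρq : ∀ x : ℝ, 0 < x → ρ (Iio (-x)) = ENNReal.ofReal (q * x ^ (-α)))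
    (t : ℝ) (ht : 0 < t) :
    ρ {x | t < |x|} ≤ ENNReal.ofReal ((|p| + |q|) * t ^ (-α)) := by
  have hSeq : {x : ℝ | t < |x|} = Iio (-t) ∪ Ioi t := by
    ext x
    simp only [mem_setOf_eq, mem_union, mem_Iio, mem_Ioi, lt_abs]
    constructor
    · rintro (h | h)
      · right; exact h
      · left; linarith
    · rintro (h | h)
      · right; linarith
      · left; exact h
  have hrp : (0:ℝ) ≤ t ^ (-α) := Real.rpow_nonneg ht.le _
  calc ρ {x | t < |x|} = ρ (Iio (-t) ∪ Ioi t) := by rw [hSeq]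
    _ ≤ ρ (Iio (-t)) + ρ (Ioi t) := measure_union_le _ _
    _ = ENNReal.ofReal (q * t ^ (-α)) + ENNReal.ofReal (p * t ^ (-α)) := by
        rw [hρq t ht, hρp t ht]
    _ ≤ ENNReal.ofReal (|q| * t ^ (-α)) + ENNReal.ofReal (|p| * t ^ (-α)) := by
        gcongr <;> [exact le_abs_self q; exact le_abs_self p]
    _ = ENNReal.ofReal ((|p| + |q|) * t ^ (-α)) := by
        rw [← ENNReal.ofReal_add (by positivity) (by positivity)]
        ring_nf

theorem vague_convergence_extends_to_bounded_vanishing_near_zero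
    (F : ℕ → Measure ℝ) (hF : ∀ n, IsProbabilityMeasure (F n))
    (ρ : Measure ℝ) (α p q : ℝ) (hα : 0 < α) (hα2 : α < 2) (hpq : p + q = 1)
    (hρp : ∀ x : ℝ, 0 < x → ρ (Ioi x) = ENNReal.ofReal (p * x ^ (-α)))
    (hρq : ∀ x : ℝ, 0 < x → ρ (Iio (-x)) = ENNReal.ofReal (q * x ^ (-α)))
    (hvague : ∀ h : ℝ → ℝ, CcTestOnE h →
      Tendsto (fun n : ℕ => (n : ℝ) * ∫ x, h x ∂(F n)) atTop (𝓝 (∫ x, h x ∂ρ))) :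
    ∀ g : ℝ → ℝ, Continuous g → (∃ C : ℝ, ∀ x, |g x| ≤ C) → VanishesNearZero g →
      Tendsto (fun n : ℕ => (n : ℝ) * ∫ x, g x ∂(F n)) atTop (𝓝 (∫ x, g x ∂ρ)) := by
  intro g hg hCex hvan
  obtain ⟨C, hC⟩ := hCex
  obtain ⟨δ, hδ, hg0⟩ := hvan
  have hC0 : 0 ≤ C := le_trans (abs_nonneg _) (hC 0)
  have hfin : ∀ t : ℝ, 0 < t → ρ {x | t < |x|} ≠ ⊤ := fun t ht =>
    ((tail_bound ρ α p q hα hρp hρq t ht).trans_lt ENNReal.ofReal_lt_top).ne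
  rw [Metric.tendsto_nhds]
  intro ε hε
  -- choose M
  have htend : Tendsto (fun M : ℝ => C * (|p| + |q|) * M ^ (-α)) atTop (𝓝 0) := by
    have := (tendsto_rpow_neg_atTop hα).const_mul (C * (|p| + |q|))
    simpa using this
  obtain ⟨M, hM1, hMε⟩ : ∃ M : ℝ, 1 ≤ M ∧ C * (|p| + |q|) * M ^ (-α) < ε / 4 := by
    have h2 := htend.eventually_lt_const (show (0:ℝ) < ε / 4 by linarith)
    obtain ⟨M, hM⟩ := (eventually_ge_atTop (1:ℝ)).and h2 |>.exists
    exact ⟨M, hM.1, hM.2⟩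
  have hM0 : (0:ℝ) < M := lt_of_lt_of_le one_pos hM1
  set ψ : ℝ → ℝ := fun x => 1 - cutA M x with hψdef
  set h1 : ℝ → ℝ := fun x => g x * cutA M x with hh1def
  have hψcont : Continuous ψ := continuous_const.sub (cutA_cont M)
  have hψ0 : ∀ x, 0 ≤ ψ x := fun x => by
    simp only [hψdef, sub_nonneg]; exact cutA_le_one M x
  have hψ1 : ∀ x, ψ x ≤ 1 := fun x => by
    simp only [hψdef]; have := cutA_nonneg M x; linarith
  have hψbd : ∀ x, |ψ x| ≤ 1 := fun x =>
    abs_le.2 ⟨by linarith [hψ0 x], hψ1 x⟩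
  have hψz : ∀ x : ℝ, |x| ≤ M → ψ x = 0 := fun x hx => by
    simp [hψdef, cutA_eq_one M x hx]
  -- CcTestOnE for ψ
  have hψcc : CcTestOnE ψ := by
    refine ⟨hψcont, ⟨M, hM0, hψz⟩, ⟨1, ?_⟩, ⟨1, ?_⟩⟩
    · apply tendsto_const_nhds.congr'
      filter_upwards [eventually_ge_atTop (M + 1)] with x hx
      rw [hψdef]
      simp [cutA_eq_zero M x (by rw [abs_of_nonneg (by linarith)]; exact hx)]
    · apply tendsto_const_nhds.congr'
      filter_upwards [eventually_le_atBot (-(M + 1))] with x hx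
      rw [hψdef]
      simp [cutA_eq_zero M x (by rw [abs_of_nonpos (by linarith)]; linarith)]
  -- CcTestOnE for h1
  have hh1cc : CcTestOnE h1 := by
    refine ⟨hg.mul (cutA_cont M), ⟨δ, hδ, fun x hx => by simp [hh1def, hg0 x hx]⟩,
      ⟨0, ?_⟩, ⟨0, ?_⟩⟩
    · apply tendsto_const_nhds.congr'
      filter_upwards [eventually_ge_atTop (M + 1)] with x hx
      simp [hh1def, cutA_eq_zero M x (by rw [abs_of_nonneg (by linarith)]; exact hx)]
    · apply tendsto_const_nhds.congr'
      filter_upwards [eventually_le_atBot (-(M + 1))] with x hx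
      simp [hh1def, cutA_eq_zero M x (by rw [abs_of_nonpos (by linarith)]; linarith)]
  have hh1bd : ∀ x, |h1 x| ≤ C := fun x => by
    rw [hh1def, abs_mul]
    calc |g x| * |cutA M x| ≤ C * 1 :=
          mul_le_mul (hC x) (abs_le.2 ⟨by linarith [cutA_nonneg M x], cutA_le_one M x⟩)
            (abs_nonneg _) hC0
      _ = C := mul_one C
  have hgψbd : ∀ x, |g x * ψ x| ≤ C := fun x => by
    rw [abs_mul]
    calc |g x| * |ψ x| ≤ C * 1 := mul_le_mul (hC x) (hψbd x) (abs_nonneg _) hC0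
      _ = C := mul_one C
  -- integrability w.r.t. F n
  have hgFi : ∀ n, Integrable g (F n) := fun n => by
    have := hF n; exact integrable_of_bdd (F n) g hg C hC
  have hh1Fi : ∀ n, Integrable h1 (F n) := fun n => by
    have := hF n; exact integrable_of_bdd (F n) h1 (hg.mul (cutA_cont M)) C hh1bd
  have hψFi : ∀ n, Integrable ψ (F n) := fun n => by
    have := hF n; exact integrable_of_bdd (F n) ψ hψcont 1 hψbd
  have hgψFi : ∀ n, Integrable (fun x => g x * ψ x) (F n) := fun n => by
    have := hF n; exact integrable_of_bdd (F n) _ (hg.mul hψcont) C hgψbd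
  -- integrability w.r.t. ρ
  have hψρi : Integrable ψ ρ :=
    integrable_of_bdd_vanish ρ ψ hψcont 1 M hψbd hψz (hfin M hM0)
  have hgρi : Integrable g ρ :=
    integrable_of_bdd_vanish ρ g hg C δ hC hg0 (hfin δ hδ)
  have hh1ρi : Integrable h1 ρ :=
    integrable_of_bdd_vanish ρ h1 (hg.mul (cutA_cont M)) C δ hh1bd
      (fun x hx => by simp [hh1def, hg0 x hx]) (hfin δ hδ)
  have hgψρi : Integrable (fun x => g x * ψ x) ρ :=
    integrable_of_bdd_vanish ρ _ (hg.mul hψcont) C δ hgψbd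
      (fun x hx => by simp [hg0 x hx]) (hfin δ hδ)
  -- ∫ ψ dρ ≤ (|p|+|q|) * M ^ (-α)
  have hSm : MeasurableSet {x : ℝ | M < |x|} :=
    measurableSet_lt measurable_const continuous_abs.measurable
  have hLψ : ∫ x, ψ x ∂ρ ≤ (|p| + |q|) * M ^ (-α) := by
    have hindInt : Integrable ({x : ℝ | M < |x|}.indicator fun _ => (1:ℝ)) ρ := by
      rw [integrable_indicator_iff hSm]
      exact integrableOn_const (hfin M hM0)
    have h1' : ∫ x, ψ x ∂ρ ≤ ∫ x, ({x : ℝ | M < |x|}.indicator fun _ => (1:ℝ)) x ∂ρ := by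
      apply integral_mono hψρi hindInt
      intro x
      by_cases hx : M < |x|
      · rw [Set.indicator_of_mem (show x ∈ {x : ℝ | M < |x|} from hx)]
        exact hψ1 x
      · push_neg at hx
        rw [hψz x hx, Set.indicator_of_notMem (by simpa using hx)]
    have h2' : ∫ x, ({x : ℝ | M < |x|}.indicator fun _ => (1:ℝ)) x ∂ρ
        = (ρ {x : ℝ | M < |x|}).toReal := by
      rw [integral_indicator_const (1:ℝ) hSm]; simp; rfl
    have h3' : (ρ {x : ℝ | M < |x|}).toReal ≤ (|p| + |q|) * M ^ (-α) :=
      ENNReal.toReal_le_of_le_ofReal (by positivity)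
        (tail_bound ρ α p q hα hρp hρq M hM0)
    linarith [h1'.trans_eq h2']
  -- difference identity
  have hdiff : ∀ (μ : Measure ℝ), Integrable g μ → Integrable h1 μ →
      Integrable (fun x => g x * ψ x) μ →
      ∫ x, g x ∂μ - ∫ x, h1 x ∂μ = ∫ x, g x * ψ x ∂μ := by
    intro μ hgi hh1i hgψi
    rw [← integral_sub hgi hh1i]
    apply integral_congr_ae
    filter_upwards with x
    simp only [hh1def, hψdef]
    ring
  have hvψ := hvague ψ hψcc
  have hvh1 := hvague h1 hh1cc
  -- eventual bounds
  have hE1 : ∀ᶠ n : ℕ in atTop, C * ((n : ℝ) * ∫ x, ψ x ∂(F n)) < ε / 2 := by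
    have : Tendsto (fun n : ℕ => C * ((n : ℝ) * ∫ x, ψ x ∂(F n))) atTop
        (𝓝 (C * ∫ x, ψ x ∂ρ)) := hvψ.const_mul C
    apply this.eventually_lt_const
    have : C * ∫ x, ψ x ∂ρ ≤ C * ((|p| + |q|) * M ^ (-α)) :=
      mul_le_mul_of_nonneg_left hLψ hC0
    have h4 : C * ((|p| + |q|) * M ^ (-α)) = C * (|p| + |q|) * M ^ (-α) := by ring
    linarith [hMε, h4 ▸ this]
  have hE2 : ∀ᶠ n : ℕ in atTop,
      dist ((n : ℝ) * ∫ x, h1 x ∂(F n)) (∫ x, h1 x ∂ρ) < ε / 4 :=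
    Metric.tendsto_nhds.1 hvh1 (ε / 4) (by linarith)
  filter_upwards [hE1, hE2] with n hn1 hn2
  rw [Real.dist_eq]
  rw [Real.dist_eq] at hn2
  -- term 1
  have ht1 : |(n : ℝ) * ∫ x, g x ∂(F n) - (n : ℝ) * ∫ x, h1 x ∂(F n)|
      ≤ C * ((n : ℝ) * ∫ x, ψ x ∂(F n)) := by
    rw [← mul_sub, abs_mul, abs_of_nonneg (Nat.cast_nonneg n),
      hdiff (F n) (hgFi n) (hh1Fi n) (hgψFi n)]
    calc (n : ℝ) * |∫ x, g x * ψ x ∂(F n)|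
        ≤ (n : ℝ) * (C * ∫ x, ψ x ∂(F n)) := by
          apply mul_le_mul_of_nonneg_left _ (Nat.cast_nonneg n)
          exact abs_integral_mul_le (F n) g ψ C hC hψ0 (hgψFi n) (hψFi n)
      _ = C * ((n : ℝ) * ∫ x, ψ x ∂(F n)) := by ring
  -- term 3
  have ht3 : |∫ x, h1 x ∂ρ - ∫ x, g x ∂ρ| < ε / 4 := by
    have : ∫ x, g x ∂ρ - ∫ x, h1 x ∂ρ = ∫ x, g x * ψ x ∂ρ := hdiff ρ hgρi hh1ρi hgψρi
    have hb : |∫ x, g x * ψ x ∂ρ| ≤ C * ∫ x, ψ x ∂ρ :=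
      abs_integral_mul_le ρ g ψ C hC hψ0 hgψρi hψρi
    have hb2 : C * ∫ x, ψ x ∂ρ ≤ C * (|p| + |q|) * M ^ (-α) := by
      have := mul_le_mul_of_nonneg_left hLψ hC0
      linarith [this]
    rw [abs_sub_comm, this]
    linarith [hb]
  have htri := abs_sub_le ((n : ℝ) * ∫ x, g x ∂(F n)) ((n : ℝ) * ∫ x, h1 x ∂(F n))
    (∫ x, g x ∂ρ)
  have htri2 := abs_sub_le ((n : ℝ) * ∫ x, h1 x ∂(F n)) (∫ x, h1 x ∂ρ) (∫ x, g x ∂ρ)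
  linarith
end

section
/- Let X be a real random variable with E|X| possibly infinite, b_n → ∞. Then E[|X/b_n| · 1_{|X| ≤ b_n}] → 0 as n → ∞. -/
open MeasureTheory Filter Topology

theorem truncated_abs_mean_tendsto_zero
    {Ω : Type*} [MeasurableSpace Ω] (P : Measure Ω) [IsProbabilityMeasure P]
    (X : Ω → ℝ) (hX : Measurable X)
    (b : ℕ → ℝ) (hb : ∀ n, 0 < b n) (hbtop : Tendsto b atTop atTop) :
    Tendsto (fun n : ℕ => ∫ ω, (if |X ω| ≤ b n then |X ω / b n| else 0) ∂P)
      atTop (𝓝 0) := by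
  have h := MeasureTheory.tendsto_integral_of_dominated_convergence
    (F := fun n ω => if |X ω| ≤ b n then |X ω / b n| else 0)
    (f := fun _ : Ω => (0:ℝ)) (bound := fun _ => (1:ℝ)) (μ := P)
    ?_ (integrable_const 1) ?_ ?_
  · simpa using h
  · intro n
    exact (Measurable.ite (measurableSet_le hX.abs measurable_const)
      ((hX.div_const _).abs) measurable_const).aestronglyMeasurable
  · intro n
    filter_upwards with ω
    by_cases hc : |X ω| ≤ b n
    · simp only [hc, if_true, Real.norm_eq_abs, abs_abs, abs_div,
        abs_of_pos (hb n)]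
      exact div_le_one_of_le₀ hc (le_of_lt (hb n))
    · simp [hc]
  · filter_upwards with ω
    have hlim : Tendsto (fun n => |X ω| / b n) atTop (𝓝 0) :=
      Tendsto.div_atTop tendsto_const_nhds hbtop
    refine squeeze_zero (fun n => ?_) (fun n => ?_) hlim
    · by_cases hc : |X ω| ≤ b n <;> simp [hc, abs_nonneg]
    · by_cases hc : |X ω| ≤ b n
      · simp [hc, abs_div, abs_of_pos (hb n)]
      · simp only [hc, if_false]
        exact div_nonneg (abs_nonneg _) (le_of_lt (hb n))
end

section
/- Suppose n·P(X/b_n ∈ ·) converges vaguely to ρ on E = [-∞,∞] \ {0}, where ρ has continuous tail functions ρ((x,∞]) = p x^{-α}, ρ([-∞,-x)) = q x^{-α}. If c_n → 0 is any real sequence, then n·P(X/b_n − c_n ∈ ·) also converges vaguely to ρ on E. -/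
open MeasureTheory Set Filter Topology

private lemma sfun_uc : UniformContinuous (fun x : ℝ => max 0 (min 1 x)) := by
  rw [Metric.uniformContinuous_iff]
  intro ε hε
  refine ⟨ε, hε, fun {a b} hab => ?_⟩
  have h1 : |max 0 (min 1 a) - max 0 (min 1 b)| ≤ |min 1 a - min 1 b| := by
    rw [max_comm 0 (min 1 a), max_comm 0 (min 1 b)]
    exact abs_max_sub_max_le_abs _ _ _
  have h2 : |min 1 a - min 1 b| ≤ |a - b| := by
    have := abs_min_sub_min_le_max 1 a 1 b
    simpa using this
  calc dist (max 0 (min 1 a)) (max 0 (min 1 b))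
      = |max 0 (min 1 a) - max 0 (min 1 b)| := Real.dist_eq _ _
    _ ≤ |a - b| := h1.trans h2
    _ = dist a b := (Real.dist_eq a b).symm
    _ < ε := hab

private lemma cc_bounded {h : ℝ → ℝ} (hh : CcTestOnE h) : ∃ C : ℝ, 0 ≤ C ∧ ∀ x, |h x| ≤ C := by
  obtain ⟨hcont, -, ⟨L1, h1⟩, ⟨L2, h2⟩⟩ := hh
  obtain ⟨M1, hM1⟩ := eventually_atTop.mp (Metric.tendsto_nhds.mp h1 1 one_pos)
  obtain ⟨M2, hM2⟩ := eventually_atBot.mp (Metric.tendsto_nhds.mp h2 1 one_pos)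
  obtain ⟨C, hC⟩ := isCompact_Icc.exists_bound_of_continuousOn
    (s := Icc (min M2 0) (max M1 0)) hcont.continuousOn
  refine ⟨max C (max (|L1| + 1) (|L2| + 1)), le_trans (by positivity) (le_max_right _ _), fun x => ?_⟩
  rcases le_total x (max M1 0) with hx1 | hx1
  · rcases le_total (min M2 0) x with hx2 | hx2
    · exact le_trans (by simpa using hC x ⟨hx2, hx1⟩) (le_max_left _ _)
    · have hx2' : x ≤ M2 := hx2.trans (min_le_left _ _)
      have := hM2 x hx2'
      rw [Real.dist_eq] at this
      have : |h x| ≤ |L2| + 1 := by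
        calc |h x| = |(h x - L2) + L2| := by ring_nf
          _ ≤ |h x - L2| + |L2| := abs_add_le _ _
          _ ≤ |L2| + 1 := by linarith
      exact this.trans (le_trans (le_max_right _ _) (le_max_right _ _))
  · have hx1' : M1 ≤ x := (le_max_left _ _).trans hx1
    have := hM1 x hx1'
    rw [Real.dist_eq] at this
    have : |h x| ≤ |L1| + 1 := by
      calc |h x| = |(h x - L1) + L1| := by ring_nf
        _ ≤ |h x - L1| + |L1| := abs_add_le _ _
        _ ≤ |L1| + 1 := by linarith
    exact this.trans (le_trans (le_max_left _ _) (le_max_right _ _))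

private lemma cc_uc {h : ℝ → ℝ} (hh : CcTestOnE h) : UniformContinuous h := by
  obtain ⟨hcont, -, ⟨L1, h1⟩, ⟨L2, h2⟩⟩ := hh
  set s : ℝ → ℝ := fun x => max 0 (min 1 x) with hs
  set φ : ℝ → ℝ := fun x => L1 * s x + L2 * s (-x) with hφ
  have hsuc : UniformContinuous s := sfun_uc
  have hφuc : UniformContinuous φ := by
    have hn : UniformContinuous (fun x : ℝ => s (-x)) := hsuc.comp uniformContinuous_id.neg
    have h1 : UniformContinuous (fun x : ℝ => L1 * s x) := by
      exact hsuc.const_smul L1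
    have h2 : UniformContinuous (fun x : ℝ => L2 * s (-x)) := by
      exact hn.const_smul L2
    exact h1.add h2
  have hφtop : Tendsto φ atTop (𝓝 L1) := by
    have : φ =ᶠ[atTop] (fun _ => L1) := by
      filter_upwards [eventually_ge_atTop (1 : ℝ)] with x hx
      have hsx : s x = 1 := by
        simp only [hs]
        rw [min_eq_left hx, max_eq_right (by norm_num : (0:ℝ) ≤ 1)]
      have hsnx : s (-x) = 0 := by
        simp only [hs]
        have : min 1 (-x) = -x := min_eq_right (by linarith)
        rw [this, max_eq_left (by linarith)]
      simp [hφ, hsx, hsnx]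
    exact Tendsto.congr' this.symm (by simp)
  have hφbot : Tendsto φ atBot (𝓝 L2) := by
    have : φ =ᶠ[atBot] (fun _ => L2) := by
      filter_upwards [eventually_le_atBot (-1 : ℝ)] with x hx
      have hsx : s x = 0 := by
        simp only [hs]
        have : min 1 x = x := min_eq_right (by linarith)
        rw [this, max_eq_left (by linarith)]
      have hsnx : s (-x) = 1 := by
        simp only [hs]
        rw [min_eq_left (by linarith), max_eq_right (by norm_num : (0:ℝ) ≤ 1)]
      simp [hφ, hsx, hsnx]
    exact Tendsto.congr' this.symm (by simp)
  have hcoc : Tendsto (fun x => h x - φ x) (cocompact ℝ) (𝓝 0) := by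
    rw [cocompact_eq_atBot_atTop, tendsto_sup]
    constructor
    · simpa using h2.sub hφbot
    · simpa using h1.sub hφtop
  have huc1 : UniformContinuous (fun x => h x - φ x) :=
    (hcont.sub hφuc.continuous).uniformContinuous_of_tendsto_cocompact hcoc
  have : h = fun x => (h x - φ x) + φ x := by funext x; ring
  rw [this]
  exact huc1.add hφuc

theorem vague_convergence_stable_under_centering
    {Ω : Type*} [MeasurableSpace Ω] (P : Measure Ω) [IsProbabilityMeasure P]
    (X : Ω → ℝ) (hX : Measurable X)
    (b : ℕ → ℝ) (hb : ∀ n, 0 < b n) (hbtop : Tendsto b atTop atTop)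
    (ρ : Measure ℝ) (α p q : ℝ) (hα : 0 < α) (hα2 : α < 2) (hpq : p + q = 1)
    (hρp : ∀ x : ℝ, 0 < x → ρ (Ioi x) = ENNReal.ofReal (p * x ^ (-α)))
    (hρq : ∀ x : ℝ, 0 < x → ρ (Iio (-x)) = ENNReal.ofReal (q * x ^ (-α)))
    (hvague : ∀ h : ℝ → ℝ, CcTestOnE h →
      Tendsto (fun n : ℕ => (n : ℝ) * ∫ ω, h (X ω / b n) ∂P) atTop (𝓝 (∫ x, h x ∂ρ)))
    (c : ℕ → ℝ) (hc : Tendsto c atTop (𝓝 0)) :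
    ∀ h : ℝ → ℝ, CcTestOnE h →
      Tendsto (fun n : ℕ => (n : ℝ) * ∫ ω, h (X ω / b n - c n) ∂P) atTop
        (𝓝 (∫ x, h x ∂ρ)) := by
  intro h hh
  obtain ⟨C, hC0, hCb⟩ := cc_bounded hh
  have huc := cc_uc hh
  obtain ⟨hcont, ⟨δ, hδ, hzero⟩, hTop, hBot⟩ := hh
  -- the cutoff test function
  set g₀ : ℝ → ℝ := fun x => min 1 (max 0 (4 * |x| / δ - 1)) with hg₀def
  have hg0nonneg : ∀ x, 0 ≤ g₀ x := fun x =>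
    le_min (by norm_num) (le_max_left _ _)
  have hg0le1 : ∀ x, g₀ x ≤ 1 := fun x => min_le_left _ _
  have hg0cont : Continuous g₀ := by
    apply continuous_const.min
    apply continuous_const.max
    exact ((continuous_const.mul continuous_abs).div_const δ).sub continuous_const
  have hg0zero : ∀ x : ℝ, |x| ≤ δ / 4 → g₀ x = 0 := by
    intro x hx
    have h1 : 4 * |x| / δ - 1 ≤ 0 := by
      rw [sub_nonpos, div_le_one hδ]; linarith
    simp only [hg₀def]
    rw [max_eq_left h1, min_eq_right (by norm_num : (0:ℝ) ≤ 1)]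
  have hg0one : ∀ x : ℝ, δ / 2 ≤ |x| → g₀ x = 1 := by
    intro x hx
    have h1 : 1 ≤ 4 * |x| / δ - 1 := by
      rw [le_sub_iff_add_le, le_div_iff₀ hδ]; linarith
    simp only [hg₀def]
    rw [max_eq_right (le_trans (by norm_num) h1), min_eq_left h1]
  have hg0cc : CcTestOnE g₀ := by
    refine ⟨hg0cont, ⟨δ / 4, by linarith, hg0zero⟩, ⟨1, ?_⟩, ⟨1, ?_⟩⟩
    · apply Tendsto.congr' (f₁ := fun _ => (1 : ℝ))
      · filter_upwards [eventually_ge_atTop (δ / 2)] with x hx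
        exact (hg0one x (by rw [abs_of_nonneg (by linarith)]; exact hx)).symm
      · exact tendsto_const_nhds
    · apply Tendsto.congr' (f₁ := fun _ => (1 : ℝ))
      · filter_upwards [eventually_le_atBot (-(δ / 2))] with x hx
        exact (hg0one x (by rw [abs_of_nonpos (by linarith)]; linarith)).symm
      · exact tendsto_const_nhds
  set K : ℝ := ∫ x, g₀ x ∂ρ with hK
  have hKconv : Tendsto (fun n : ℕ => (n : ℝ) * ∫ ω, g₀ (X ω / b n) ∂P) atTop (𝓝 K) :=
    hvague g₀ hg0cc
  -- integrability facts
  have hintd : ∀ (n : ℕ) (d : ℝ), Integrable (fun ω => h (X ω / b n - d)) P := by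
    intro n d
    refine ⟨((hcont.measurable).comp ((hX.div_const (b n)).sub_const d)).aestronglyMeasurable,
      HasFiniteIntegral.of_bounded (C := C) (ae_of_all _ fun ω => ?_)⟩
    simpa [Real.norm_eq_abs] using hCb (X ω / b n - d)
  have hint0 : ∀ n : ℕ, Integrable (fun ω => h (X ω / b n)) P := by
    intro n; simpa using hintd n 0
  have hintg : ∀ n : ℕ, Integrable (fun ω => g₀ (X ω / b n)) P := by
    intro n
    refine ⟨((hg0cont.measurable).comp (hX.div_const (b n))).aestronglyMeasurable,
      HasFiniteIntegral.of_bounded (C := 1) (ae_of_all _ fun ω => ?_)⟩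
    rw [Real.norm_eq_abs, abs_of_nonneg (hg0nonneg _)]
    exact hg0le1 _
  -- the difference tends to 0
  have key : Tendsto (fun n : ℕ =>
      ((n : ℝ) * ∫ ω, h (X ω / b n - c n) ∂P) - (n : ℝ) * ∫ ω, h (X ω / b n) ∂P)
      atTop (𝓝 0) := by
    rw [Metric.tendsto_nhds]
    intro ε hε
    have hKpos : (0 : ℝ) < |K| + 1 := by positivity
    set ε' : ℝ := ε / (2 * (|K| + 1)) with hε'def
    have hε' : 0 < ε' := by positivity
    obtain ⟨η, hη, hηuc⟩ := Metric.uniformContinuous_iff.mp huc ε' hε'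
    have hcsmall : ∀ᶠ n in atTop, |c n| < min η (δ / 4) := by
      have := Metric.tendsto_nhds.mp hc (min η (δ / 4)) (lt_min hη (by linarith))
      simpa [Real.dist_eq] using this
    have hKb : ∀ᶠ n : ℕ in atTop, (n : ℝ) * ∫ ω, g₀ (X ω / b n) ∂P < |K| + 1 := by
      filter_upwards [Metric.tendsto_nhds.mp hKconv 1 one_pos] with n hn
      rw [Real.dist_eq] at hn
      have h1 : (n : ℝ) * ∫ ω, g₀ (X ω / b n) ∂P - K < 1 := (le_abs_self _).trans_lt hn
      have h2 : K ≤ |K| := le_abs_self _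
      linarith
    filter_upwards [hcsmall, hKb] with n hcn hKn
    -- pointwise estimate
    have hpt : ∀ y : ℝ, |h (y - c n) - h y| ≤ ε' * g₀ y := by
      intro y
      rcases le_or_gt |y| (δ / 2) with hy | hy
      · have hy1 : h y = 0 := hzero y (hy.trans (by linarith))
        have hy2 : h (y - c n) = 0 := by
          apply hzero
          have : |y - c n| ≤ |y| + |c n| := abs_sub y (c n)
          have hcn' : |c n| ≤ δ / 4 := (hcn.trans_le (min_le_right _ _)).le
          linarith
        rw [hy1, hy2, sub_zero, abs_zero]
        exact mul_nonneg hε'.le (hg0nonneg y)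
      · rw [hg0one y hy.le, mul_one]
        have hd : dist (y - c n) y < η := by
          rw [Real.dist_eq]
          simpa [abs_neg] using hcn.trans_le (min_le_left _ _)
        have := hηuc hd
        rw [Real.dist_eq] at this
        exact this.le
    -- integral estimate
    have hIeq : (∫ ω, h (X ω / b n - c n) ∂P) - (∫ ω, h (X ω / b n) ∂P)
        = ∫ ω, (h (X ω / b n - c n) - h (X ω / b n)) ∂P :=
      (integral_sub (hintd n (c n)) (hint0 n)).symm
    have hIle : |∫ ω, (h (X ω / b n - c n) - h (X ω / b n)) ∂P|
        ≤ ε' * ∫ ω, g₀ (X ω / b n) ∂P := by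
      calc |∫ ω, (h (X ω / b n - c n) - h (X ω / b n)) ∂P|
          ≤ ∫ ω, |h (X ω / b n - c n) - h (X ω / b n)| ∂P := by
            simpa [Real.norm_eq_abs] using
              norm_integral_le_integral_norm (fun ω => h (X ω / b n - c n) - h (X ω / b n)) (μ := P)
        _ ≤ ∫ ω, ε' * g₀ (X ω / b n) ∂P := by
            apply integral_mono ((hintd n (c n)).sub (hint0 n)).abs ((hintg n).const_mul ε')
            intro ω
            exact hpt (X ω / b n)
        _ = ε' * ∫ ω, g₀ (X ω / b n) ∂P := integral_const_mul _ _
    have hn0 : (0 : ℝ) ≤ (n : ℝ) := Nat.cast_nonneg n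
    rw [Real.dist_eq, sub_zero]
    calc |(n : ℝ) * (∫ ω, h (X ω / b n - c n) ∂P) - (n : ℝ) * ∫ ω, h (X ω / b n) ∂P|
        = (n : ℝ) * |(∫ ω, h (X ω / b n - c n) ∂P) - ∫ ω, h (X ω / b n) ∂P| := by
          rw [← mul_sub, abs_mul, abs_of_nonneg hn0]
      _ ≤ (n : ℝ) * (ε' * ∫ ω, g₀ (X ω / b n) ∂P) := by
          apply mul_le_mul_of_nonneg_left _ hn0
          rw [hIeq]; exact hIle
      _ = ε' * ((n : ℝ) * ∫ ω, g₀ (X ω / b n) ∂P) := by ring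
      _ ≤ ε' * (|K| + 1) := mul_le_mul_of_nonneg_left hKn.le hε'.le
      _ = ε / 2 := by rw [hε'def]; field_simp
      _ < ε := by linarith
  have hfinal := key.add (hvague h ⟨hcont, ⟨δ, hδ, hzero⟩, hTop, hBot⟩)
  rw [zero_add] at hfinal
  refine hfinal.congr fun n => ?_
  ring
end
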